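/- For any positive integer n and integer c with c^2 - 4 ≠ 0, the central trinomial coefficients satisfy (n+1)*T(n+1,0) = (2n+1)*c*T(n,0) - n*(c^2-4)*T(n-1,0). -/

import Mathlib

open Finset

/-- The trinomial coefficient: coefficient of `x^k` in `(x + c + x⁻¹)^n` over `R`. -/
noncomputable def triCoeff (R : Type*) [CommRing R] (c : R) (n : ℕ) (k : ℤ) : R :=
  (((LaurentPolynomial.T 1 + LaurentPolynomial.C c + LaurentPolynomial.T (-1)) ^ n :
      LaurentPolynomial R).coeff : ℤ →₀ R) k


/-- `aCoef n k = C(n,2k) * C(2k,k)` as an integer. -/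
def aCoef (n k : ℕ) : ℤ := ((n.choose (2*k)) * ((2*k).choose k) : ℕ)

lemma aCoef_eq_zero {n k : ℕ} (h : n < 2*k) : aCoef n k = 0 := by
  simp [aCoef, Nat.choose_eq_zero_of_lt h]

lemma key_nat (n k : ℕ) :
    (n.choose (2*k+1) + (n+2) * n.choose (2*k)) * (2*k+2).choose (k+1)
      = 4 * (n+1) * (n.choose (2*k) * (2*k).choose k) := by
  have hB : (2*k+2).choose (k+1) * (k+1) = 2 * (2*k+1) * (2*k).choose k := by
    have h1 : (2*k+2).choose (k+1) = 2 * (2*k+1).choose (k+1) := by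
      rw [Nat.choose_succ_succ' (2*k+1) k]
      have hsymm : (2*k+1).choose k = (2*k+1).choose (k+1) := by
        rw [← Nat.choose_symm (by omega : k ≤ 2*k+1)]
        congr 1; omega
      omega
    have h2 : (2*k+1).choose (k+1) * (k+1) = (2*k+1) * (2*k).choose k := by
      have := Nat.add_one_mul_choose_eq (2*k) k
      simpa [Nat.succ_eq_add_one] using this.symm
    calc (2*k+2).choose (k+1) * (k+1) = 2 * ((2*k+1).choose (k+1) * (k+1)) := by rw [h1]; ring
      _ = 2 * (2*k+1) * (2*k).choose k := by rw [h2]; ring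
  have hA : n.choose (2*k+1) * (2*k+1) = n.choose (2*k) * (n - 2*k) :=
    Nat.choose_succ_right_eq n (2*k)
  rcases le_or_gt (2*k) n with h | h
  · obtain ⟨d, rfl⟩ : ∃ d, n = 2*k + d := ⟨n - 2*k, by omega⟩
    apply Nat.eq_of_mul_eq_mul_right (show 0 < (k+1)*(2*k+1) by positivity)
    have hA' : (2*k+d).choose (2*k+1) * (2*k+1) = (2*k+d).choose (2*k) * d := by
      simpa using hA
    calc ((2*k+d).choose (2*k+1) + (2*k+d+2) * (2*k+d).choose (2*k)) * (2*k+2).choose (k+1) * ((k+1)*(2*k+1))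
        = ((2*k+d).choose (2*k+1) * (2*k+1) + (2*k+d+2) * (2*k+1) * (2*k+d).choose (2*k)) * ((2*k+2).choose (k+1) * (k+1)) := by ring
      _ = ((2*k+d).choose (2*k) * d + (2*k+d+2) * (2*k+1) * (2*k+d).choose (2*k)) * (2 * (2*k+1) * (2*k).choose k) := by rw [hA', hB]
      _ = 4 * (2*k+d+1) * ((2*k+d).choose (2*k) * (2*k).choose k) * ((k+1)*(2*k+1)) := by ring
  · rw [Nat.choose_eq_zero_of_lt h, Nat.choose_eq_zero_of_lt (by omega)]
    ring

lemma gamma_succ (n k : ℕ) :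
    ((n:ℤ)+2) * aCoef (n+2) (k+1) - (2*(n:ℤ)+3) * aCoef (n+1) (k+1) + ((n:ℤ)+1) * aCoef n (k+1)
      = 4*((n:ℤ)+1) * aCoef n k := by
  have h2 : 2*(k+1) = 2*k+2 := by ring
  have e1 : (n+2).choose (2*k+2) = n.choose (2*k) + 2 * n.choose (2*k+1) + n.choose (2*k+2) := by
    rw [show n+2 = (n+1)+1 from rfl, Nat.choose_succ_succ' (n+1) (2*k+1),
      Nat.choose_succ_succ' n (2*k), Nat.choose_succ_succ' n (2*k+1)]
    ring
  have e2 : (n+1).choose (2*k+2) = n.choose (2*k+1) + n.choose (2*k+2) :=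
    Nat.choose_succ_succ' n (2*k+1)
  have hk := key_nat n k
  unfold aCoef
  rw [h2, e1, e2]
  push_cast
  zify at hk
  linear_combination hk

/-- summand -/
def tt (c : ℤ) (n k : ℕ) : ℤ := aCoef n k * c ^ (n - 2*k)

/-- certificate -/
def G (c : ℤ) (n k : ℕ) : ℤ :=
  (((n:ℤ)+2) * aCoef (n+2) k - (2*(n:ℤ)+3) * aCoef (n+1) k + ((n:ℤ)+1) * aCoef n k)
    * c ^ (n+2-2*k)

lemma pointwise (c : ℤ) (n k : ℕ) :
    ((n:ℤ)+2) * tt c (n+2) k - (2*(n:ℤ)+3) * c * tt c (n+1) k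
        + ((n:ℤ)+1)*(c^2-4) * tt c n k
      = G c n k - G c n (k+1) := by
  have h2 : G c n (k+1) = 4*((n:ℤ)+1) * aCoef n k * c ^ (n - 2*k) := by
    rw [G, gamma_succ]
    congr 2
    omega
  have hA : (aCoef (n+1) k : ℤ) * (c * c ^ (n+1-2*k)) = aCoef (n+1) k * c ^ (n+2-2*k) := by
    rcases le_or_gt (2*k) (n+1) with h | h
    · congr 1
      rw [← pow_succ']
      congr 1
      omega
    · rw [aCoef_eq_zero h]; ring
  have hB : (aCoef n k : ℤ) * (c^2 * c ^ (n-2*k)) = aCoef n k * c ^ (n+2-2*k) := by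
    rcases le_or_gt (2*k) n with h | h
    · congr 1
      rw [← pow_add]
      congr 1
      omega
    · rw [aCoef_eq_zero h]; ring
  rw [h2]
  unfold tt G
  have hexp : n + 2 - 2*k = (n+2) - 2*k := rfl
  linear_combination (-(2*(n:ℤ)+3)) * hA + ((n:ℤ)+1) * hB

/-- the sum -/
def S (c : ℤ) (n : ℕ) : ℤ := ∑ k ∈ range (n+1), tt c n k

lemma S_ext (c : ℤ) (n N : ℕ) (h : n + 1 ≤ N) : ∑ k ∈ range N, tt c n k = S c n := by
  rw [S]
  symm
  apply Finset.sum_subset (Finset.range_subset_range.2 h)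
  intro k _ hk
  simp only [Finset.mem_range, not_lt] at hk
  rw [tt, aCoef_eq_zero (by omega)]
  ring

lemma S_rec (c : ℤ) (n : ℕ) :
    ((n:ℤ)+2) * S c (n+2) = (2*(n:ℤ)+3)*c * S c (n+1) - ((n:ℤ)+1)*(c^2-4) * S c n := by
  have htel : ∑ k ∈ range (n+3), (G c n k - G c n (k+1)) = G c n 0 - G c n (n+3) :=
    Finset.sum_range_sub' (G c n) (n+3)
  have hG0 : G c n 0 = 0 := by
    simp only [G, aCoef, Nat.mul_zero, Nat.choose_zero_right, Nat.choose_self]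
    push_cast
    ring
  have hGN : G c n (n+3) = 0 := by
    rw [G, aCoef_eq_zero (by omega), aCoef_eq_zero (by omega), aCoef_eq_zero (by omega)]
    ring
  have hsum : ∑ k ∈ range (n+3),
      (((n:ℤ)+2) * tt c (n+2) k - (2*(n:ℤ)+3) * c * tt c (n+1) k
        + ((n:ℤ)+1)*(c^2-4) * tt c n k) = 0 := by
    rw [Finset.sum_congr rfl (fun k _ => pointwise c n k), htel, hG0, hGN]
    ring
  rw [Finset.sum_add_distrib, Finset.sum_sub_distrib, ← Finset.mul_sum, ← Finset.mul_sum,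
    ← Finset.mul_sum, S_ext c (n+2) (n+3) (by omega), S_ext c (n+1) (n+3) (by omega),
    S_ext c n (n+3) (by omega)] at hsum
  linarith

open LaurentPolynomial in
lemma expand_pow (c : ℤ) (n : ℕ) :
    ((T 1 + C c + T (-1) : LaurentPolynomial ℤ) ^ n)
      = ∑ m ∈ range (n+1), ∑ j ∈ range (m+1),
          AddMonoidAlgebra.single (2*(j:ℤ) - m) ((n.choose m : ℤ) * (m.choose j : ℤ) * c ^ (n-m)) := by
  rw [add_right_comm, add_pow]
  refine Finset.sum_congr rfl fun m hm => ?_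
  rw [add_pow, Finset.sum_mul, Finset.sum_mul]
  refine Finset.sum_congr rfl fun j hj => ?_
  have hj' : ((m - j : ℕ) : ℤ) = (m:ℤ) - j :=
    Nat.cast_sub (by simpa using Nat.lt_succ_iff.mp (Finset.mem_range.mp hj))
  rw [T_pow, T_pow, ← T_add, single_eq_C_mul_T]
  have h : (2*(j:ℤ) - m) = (↑j * 1 + ↑(m-j) * (-1)) := by rw [hj']; ring
  rw [h]
  rw [← map_natCast (C : ℤ →+* LaurentPolynomial ℤ) (m.choose j),
    ← map_natCast (C : ℤ →+* LaurentPolynomial ℤ) (n.choose m)]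
  rw [map_mul, map_mul, map_pow]
  ring

lemma triCoeff_eq_S (c : ℤ) (n : ℕ) : triCoeff ℤ c n 0 = S c n := by
  rw [triCoeff, expand_pow]
  rw [AddMonoidAlgebra.coeff_sum, Finsupp.finset_sum_apply]
  simp only [AddMonoidAlgebra.coeff_sum, AddMonoidAlgebra.coeff_single, Finsupp.finset_sum_apply, Finsupp.single_apply]
  have hinner : ∀ m ∈ range (n+1),
      (∑ j ∈ range (m+1), if 2*(j:ℤ) - m = 0 then (n.choose m : ℤ) * (m.choose j : ℤ) * c ^ (n-m) else 0)
        = ∑ j ∈ range (n+1), (if 2*(j:ℤ) - m = 0 then (n.choose m : ℤ) * (m.choose j : ℤ) * c ^ (n-m) else 0) := by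
    intro m hm
    apply Finset.sum_subset
    · exact Finset.range_subset_range.2 (Finset.mem_range.mp hm)
    · intro j _ hj
      simp only [Finset.mem_range, not_lt] at hj
      rw [Nat.choose_eq_zero_of_lt (show m < j by omega)]
      simp
  rw [Finset.sum_congr rfl hinner, Finset.sum_comm]
  rw [S]
  refine Finset.sum_congr rfl fun j hj => ?_
  have hcond : ∀ m : ℕ, (2*(j:ℤ) - m = 0) ↔ (m = 2*j) := by
    intro m
    constructor
    · intro h; exact_mod_cast (by linarith : (m:ℤ) = 2*j)
    · intro h; subst h; push_cast; ring
  simp only [hcond]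
  rw [Finset.sum_ite_eq' (range (n+1)) (2*j)
    (fun m => (n.choose m : ℤ) * (m.choose j : ℤ) * c ^ (n-m))]
  rw [tt, aCoef]
  by_cases h : 2*j ∈ range (n+1)
  · rw [if_pos h]
    push_cast
    ring
  · rw [if_neg h]
    simp only [Finset.mem_range, not_lt] at h
    rw [Nat.choose_eq_zero_of_lt (by omega)]
    push_cast
    ring

theorem central_tri_rec (c : ℤ) (hc : c ^ 2 - 4 ≠ 0) (n : ℕ) (hn : 0 < n) :
    ((n : ℤ) + 1) * triCoeff ℤ c (n + 1) 0 =
      (2 * (n : ℤ) + 1) * c * triCoeff ℤ c n 0 -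
        (n : ℤ) * (c ^ 2 - 4) * triCoeff ℤ c (n - 1) 0 := by
  obtain ⟨m, rfl⟩ : ∃ m, n = m + 1 := ⟨n - 1, by omega⟩
  simp only [triCoeff_eq_S, Nat.add_sub_cancel]
  have h := S_rec c m
  push_cast
  linear_combination h
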